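/- For every natural number L, ∑_{M2=0}^{L} ∑_{M1=M2}^{⌊(L+M2)/2⌋} ( C(L, M1)·C(M1, M2) - C(L, M1 - 1)·C(M1 - 1, M2) ) · ( L - 2·M1 + M2 + 1 ) = 3^L, computed in the integers, where for M1 = 0 the subtracted term C(L, -1)·C(-1, M2) is 0. -/

import Mathlib

/-- Integer-valued binomial coefficient: `C(n,k)` for integers `n`, `k`, equal to
`Nat.choose` when `0 ≤ k ≤ n` and `0` otherwise. -/
def intChoose (n k : ℤ) : ℤ := if 0 ≤ k ∧ k ≤ n then n.toNat.choose k.toNat else 0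

lemma intChoose_natCast (n k : ℕ) : intChoose (n : ℤ) (k : ℤ) = (n.choose k : ℤ) := by
  unfold intChoose
  split_ifs with h
  · simp
  · push_neg at h
    have hk : (n : ℤ) < k := h (by positivity)
    have : n < k := by exact_mod_cast hk
    simp [Nat.choose_eq_zero_of_lt this]

lemma intChoose_pred (n k : ℕ) (hk : k ≠ 0) :
    intChoose (n : ℤ) ((k : ℤ) - 1) = (n.choose (k - 1) : ℤ) := by
  have : ((k : ℤ) - 1) = ((k - 1 : ℕ) : ℤ) := by omega
  rw [this, intChoose_natCast]

lemma intChoose_pred_left (k m : ℕ) (hk : k ≠ 0) :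
    intChoose ((k : ℤ) - 1) (m : ℤ) = ((k - 1).choose m : ℤ) := by
  have : ((k : ℤ) - 1) = ((k - 1 : ℕ) : ℤ) := by omega
  rw [this, intChoose_natCast]

lemma intChoose_neg_one (n : ℤ) : intChoose n (-1) = 0 := by
  simp [intChoose]

/-- The state-count `a m = C(L,m) C(m,M2)` as an integer. -/
def sCount (L M2 m : ℕ) : ℤ := ((L.choose m * m.choose M2 : ℕ) : ℤ)

/-- `a (m-1)`, with the convention that it vanishes for `m = 0`. -/
def sCountPred (L M2 m : ℕ) : ℤ := if m = 0 then 0 else sCount L M2 (m - 1)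

lemma sCountPred_self (L M2 : ℕ) : sCountPred L M2 M2 = 0 := by
  unfold sCountPred
  split_ifs with h
  · rfl
  · have : M2 - 1 < M2 := by omega
    simp [sCount, Nat.choose_eq_zero_of_lt this]

lemma telescope (L M2 : ℕ) : ∀ N, M2 ≤ N →
    ∑ M1 ∈ Finset.Icc M2 N, (sCount L M2 M1 - sCountPred L M2 M1) = sCount L M2 N := by
  intro N hN
  induction N, hN using Nat.le_induction with
  | base => simp [sCountPred_self]
  | succ n hn ih =>
      rw [Finset.sum_Icc_succ_top (by omega), ih]
      have : sCountPred L M2 (n + 1) = sCount L M2 n := by simp [sCountPred]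
      rw [this]; ring

/-- Symmetry of the state count. -/
lemma sCount_symm (L M2 m : ℕ) (h2 : M2 ≤ m) (hL : m ≤ L) :
    sCount L M2 (L + M2 - m) = sCount L M2 m := by
  unfold sCount
  have h1 : Nat.choose L m * Nat.choose m M2 = Nat.choose L M2 * Nat.choose (L - M2) (m - M2) :=
    Nat.choose_mul h2
  have h2' : M2 ≤ L + M2 - m := by omega
  have hL' : L + M2 - m ≤ L := by omega
  have h3 : Nat.choose L (L + M2 - m) * Nat.choose (L + M2 - m) M2
      = Nat.choose L M2 * Nat.choose (L - M2) (L + M2 - m - M2) := Nat.choose_mul h2'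
  have h4 : L + M2 - m - M2 = (L - M2) - (m - M2) := by omega
  have h5 : Nat.choose (L - M2) ((L - M2) - (m - M2)) = Nat.choose (L - M2) (m - M2) :=
    Nat.choose_symm (by omega)
  rw [h1, h3, h4, h5]

lemma su3_inner_sum (L M2 : ℕ) (hM2 : M2 ≤ L) :
    ∑ M1 ∈ Finset.Icc M2 ((L + M2) / 2),
        (sCount L M2 M1 - sCountPred L M2 M1) * ((L : ℤ) - 2 * M1 + M2 + 1)
      = (L.choose M2 : ℤ) * 2 ^ (L - M2) := by
  have step1 : ∀ M1 ∈ Finset.Icc M2 ((L + M2) / 2),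
      (sCount L M2 M1 - sCountPred L M2 M1) * ((L : ℤ) - 2 * M1 + M2 + 1)
        = ∑ m ∈ Finset.Icc M2 L, (sCount L M2 M1 - sCountPred L M2 M1) *
            (if M1 ≤ m ∧ M1 + m ≤ L + M2 then 1 else 0) := by
    intro M1 hM1
    rw [Finset.mem_Icc] at hM1
    rw [← Finset.mul_sum]
    congr 1
    rw [Finset.sum_boole]
    have hfil : Finset.filter (fun m => M1 ≤ m ∧ M1 + m ≤ L + M2) (Finset.Icc M2 L)
        = Finset.Icc M1 (L + M2 - M1) := by
      ext m
      simp only [Finset.mem_filter, Finset.mem_Icc]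
      omega
    rw [hfil, Nat.card_Icc]
    have h2M1 : 2 * M1 ≤ L + M2 := by omega
    omega
  rw [Finset.sum_congr rfl step1, Finset.sum_comm]
  have step2 : ∀ m ∈ Finset.Icc M2 L,
      ∑ M1 ∈ Finset.Icc M2 ((L + M2) / 2), (sCount L M2 M1 - sCountPred L M2 M1) *
          (if M1 ≤ m ∧ M1 + m ≤ L + M2 then 1 else 0)
        = sCount L M2 m := by
    intro m hm
    rw [Finset.mem_Icc] at hm
    have hrw : ∀ M1, (sCount L M2 M1 - sCountPred L M2 M1) *
        (if M1 ≤ m ∧ M1 + m ≤ L + M2 then 1 else 0)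
        = if M1 ≤ m ∧ M1 + m ≤ L + M2 then (sCount L M2 M1 - sCountPred L M2 M1) else 0 := by
      intro M1; split <;> ring
    simp only [hrw]
    rw [← Finset.sum_filter]
    have hfil : Finset.filter (fun M1 => M1 ≤ m ∧ M1 + m ≤ L + M2)
        (Finset.Icc M2 ((L + M2) / 2)) = Finset.Icc M2 (min m (L + M2 - m)) := by
      ext M1
      simp only [Finset.mem_filter, Finset.mem_Icc]
      omega
    rw [hfil, telescope L M2 _ (by omega)]
    rcases le_or_gt m (L + M2 - m) with h | h
    · rw [min_eq_left h]
    · rw [min_eq_right h.le]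
      have : L + M2 - m ≤ L + M2 := by omega
      exact sCount_symm L M2 m hm.1 hm.2
  rw [Finset.sum_congr rfl step2]
  have step3 : ∀ m ∈ Finset.Icc M2 L,
      sCount L M2 m = (L.choose M2 : ℤ) * ((L - M2).choose (m - M2) : ℤ) := by
    intro m hm
    rw [Finset.mem_Icc] at hm
    unfold sCount
    rw [Nat.choose_mul hm.1]
    push_cast
    ring
  rw [Finset.sum_congr rfl step3, ← Finset.mul_sum]
  congr 1
  have : ∑ m ∈ Finset.Icc M2 L, ((L - M2).choose (m - M2) : ℤ)
      = ∑ j ∈ Finset.range (L - M2 + 1), ((L - M2).choose j : ℤ) := by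
    apply Finset.sum_nbij' (fun m => m - M2) (fun j => j + M2)
    · intro m hm; rw [Finset.mem_Icc] at hm; rw [Finset.mem_range]; omega
    · intro j hj; rw [Finset.mem_range] at hj; rw [Finset.mem_Icc]; omega
    · intro m hm; rw [Finset.mem_Icc] at hm; omega
    · intro j hj; omega
    · intro m hm; rfl
  rw [this, ← Nat.cast_sum, Nat.sum_range_choose]
  push_cast
  ring

theorem su3_alpha1_completeness (L : ℕ) :
    ∑ M2 ∈ Finset.range (L + 1), ∑ M1 ∈ Finset.Icc M2 ((L + M2) / 2),
        (intChoose L M1 * intChoose M1 M2 -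
            intChoose L ((M1 : ℤ) - 1) * intChoose ((M1 : ℤ) - 1) M2) *
          ((L : ℤ) - 2 * M1 + M2 + 1) = 3 ^ L := by
  have key : ∀ M2 ∈ Finset.range (L + 1), ∀ M1 ∈ Finset.Icc M2 ((L + M2) / 2),
      (intChoose L M1 * intChoose M1 M2 -
          intChoose L ((M1 : ℤ) - 1) * intChoose ((M1 : ℤ) - 1) M2) *
        ((L : ℤ) - 2 * M1 + M2 + 1)
      = (sCount L M2 M1 - sCountPred L M2 M1) * ((L : ℤ) - 2 * M1 + M2 + 1) := by
    intro M2 _ M1 _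
    congr 1
    rcases Nat.eq_zero_or_pos M1 with h0 | hpos
    · have h1 : (M1 : ℤ) - 1 = -1 := by rw [h0]; norm_num
      rw [h1, intChoose_neg_one, intChoose_natCast, intChoose_natCast]
      simp [sCount, sCountPred, h0]
    · rw [intChoose_natCast, intChoose_natCast,
        intChoose_pred L M1 (by omega), intChoose_pred_left M1 M2 (by omega)]
      simp only [sCount, sCountPred, if_neg (by omega : M1 ≠ 0)]
      push_cast
      ring
  calc ∑ M2 ∈ Finset.range (L + 1), ∑ M1 ∈ Finset.Icc M2 ((L + M2) / 2),
        (intChoose L M1 * intChoose M1 M2 -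
            intChoose L ((M1 : ℤ) - 1) * intChoose ((M1 : ℤ) - 1) M2) *
          ((L : ℤ) - 2 * M1 + M2 + 1)
      = ∑ M2 ∈ Finset.range (L + 1), ∑ M1 ∈ Finset.Icc M2 ((L + M2) / 2),
          (sCount L M2 M1 - sCountPred L M2 M1) * ((L : ℤ) - 2 * M1 + M2 + 1) := by
        exact Finset.sum_congr rfl fun M2 hM2 => Finset.sum_congr rfl (key M2 hM2)
    _ = ∑ M2 ∈ Finset.range (L + 1), (L.choose M2 : ℤ) * 2 ^ (L - M2) := by
        refine Finset.sum_congr rfl fun M2 hM2 => ?_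
        rw [Finset.mem_range] at hM2
        exact su3_inner_sum L M2 (by omega)
    _ = 3 ^ L := by
        rw [show (3 : ℤ) = 1 + 2 by norm_num, add_pow]
        refine Finset.sum_congr rfl fun k hk => ?_
        ring
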